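/- For every n ≥ 0 there exists a palindromic factor of length n in the infinite Tribonacci word T. -/

import Mathlib

/-- The Tribonacci morphism: 0 → 01, 1 → 02, 2 → 0. -/
def tribMap (c : ℕ) : List ℕ := if c = 0 then [0,1] else if c = 1 then [0,2] else [0]

/-- Iterates of the Tribonacci morphism on the word `0`. -/
def tribIter : ℕ → List ℕ
  | 0 => [0]
  | k+1 => (tribIter k).flatMap tribMap

/-- The infinite Tribonacci word, the fixed point starting with 0 of 0→01, 1→02, 2→0. -/
def tribWord (n : ℕ) : ℕ := (tribIter (n+1)).getD n 0

/-- The Tribonacci numbers. -/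
def trib : ℕ → ℕ
  | 0 => 0
  | 1 => 1
  | 2 => 1
  | n+3 => trib (n+2) + trib (n+1) + trib n

/-- The "reversed" morphism. -/
def tauMap (c : ℕ) : List ℕ := if c = 0 then [1,0] else if c = 1 then [2,0] else [0]

/-- Palindromic prefixes of the Tribonacci word. -/
def pal : ℕ → List ℕ
  | 0 => []
  | k+1 => (pal k).flatMap tribMap ++ [0]

lemma tau_reverse (c : ℕ) : (tauMap c).reverse = tribMap c := by
  unfold tauMap tribMap
  by_cases h0 : c = 0 <;> by_cases h1 : c = 1 <;> simp [h0, h1]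

lemma shift_eq (w : List ℕ) : w.flatMap tribMap ++ [0] = 0 :: w.flatMap tauMap := by
  induction w with
  | nil => simp
  | cons c w ih =>
    rw [List.flatMap_cons, List.flatMap_cons, List.append_assoc, ih]
    unfold tribMap tauMap
    by_cases h0 : c = 0 <;> by_cases h1 : c = 1 <;> simp [h0, h1]

lemma pal_reverse (k : ℕ) : (pal k).reverse = pal k := by
  induction k with
  | zero => rfl
  | succ k ih =>
    show ((pal k).flatMap tribMap ++ [0]).reverse = _
    rw [shift_eq, List.reverse_cons, List.reverse_flatMap]
    have : List.reverse ∘ tauMap = tribMap := by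
      funext c; exact tau_reverse c
    rw [this, ih]
    rfl

lemma tribMap_ne_nil (c : ℕ) : tribMap c ≠ [] := by
  unfold tribMap
  by_cases h0 : c = 0 <;> by_cases h1 : c = 1 <;> simp [h0, h1]

lemma length_flatMap_ge (w : List ℕ) : w.length ≤ (w.flatMap tribMap).length := by
  induction w with
  | nil => simp
  | cons c w ih =>
    rw [List.flatMap_cons, List.length_append]
    have : 1 ≤ (tribMap c).length := List.length_pos_iff.mpr (tribMap_ne_nil c)
    simp only [List.length_cons]
    omega

lemma length_flatMap_gt (w : List ℕ) (h : 0 ∈ w) :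
    w.length + 1 ≤ (w.flatMap tribMap).length := by
  induction w with
  | nil => simp at h
  | cons c w ih =>
    rw [List.flatMap_cons, List.length_append]
    rcases List.mem_cons.mp h with h0 | h0
    · have h2 : (tribMap c).length = 2 := by rw [← h0]; rfl
      have := length_flatMap_ge w
      simp only [List.length_cons, h2]
      omega
    · have h1 : 1 ≤ (tribMap c).length := List.length_pos_iff.mpr (tribMap_ne_nil c)
      have := ih h0
      simp only [List.length_cons]; omega

lemma flatMap_head (w : List ℕ) (h : w ≠ []) :
    ∃ z, w.flatMap tribMap = 0 :: z := by
  rcases w with _ | ⟨c, w⟩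
  · exact absurd rfl h
  · rw [List.flatMap_cons]
    unfold tribMap
    by_cases h0 : c = 0 <;> by_cases h1 : c = 1 <;> simp [h0, h1]

lemma tribIter_head (m : ℕ) : ∃ z, tribIter m = 0 :: z := by
  induction m with
  | zero => exact ⟨[], rfl⟩
  | succ m ih =>
    rcases ih with ⟨z, hz⟩
    show ∃ z', (tribIter m).flatMap tribMap = 0 :: z'
    exact flatMap_head _ (by rw [hz]; simp)

lemma tribIter_ne_nil (m : ℕ) : tribIter m ≠ [] := by
  rcases tribIter_head m with ⟨z, hz⟩; rw [hz]; simp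

lemma chain_flatMap (w : List ℕ) :
    List.Chain' (fun a b => a = 0 ∨ b = 0) (w.flatMap tribMap) := by
  induction w with
  | nil => exact List.isChain_nil
  | cons c w ih =>
    rw [List.flatMap_cons]; apply List.isChain_append.mpr
    refine ⟨?_, ih, ?_⟩
    · unfold tribMap
      by_cases h0 : c = 0 <;> by_cases h1 : c = 1 <;> simp [h0, h1]
    · intro x hx y hy
      right
      rcases w with _ | ⟨d, w⟩
      · simp at hy
      · rcases flatMap_head (d :: w) (by simp) with ⟨z, hz⟩
        rw [hz] at hy
        simp at hy
        omega

/-- Key invariant: `pal k` is a prefix of `tribIter (k+2)` with at least 2 letters to spare. -/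
lemma pal_prefix (k : ℕ) : ∃ r, pal k ++ r = tribIter (k+2) ∧ 2 ≤ r.length := by
  induction k with
  | zero => exact ⟨[0,1,0,2], rfl, by simp⟩
  | succ k ih =>
    rcases ih with ⟨r, hr, hlen⟩
    -- r contains a 0
    have hchain : List.Chain' (fun a b => a = 0 ∨ b = 0) (pal k ++ r) := by
      rw [hr]; exact chain_flatMap (tribIter (k+1))
    have hzero : 0 ∈ r := by
      have hc : List.Chain' (fun a b => a = 0 ∨ b = 0) r :=
        (List.isChain_append.mp hchain).2.1
      rcases r with _ | ⟨a, r'⟩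
      · simp at hlen
      · rcases r' with _ | ⟨b, r''⟩
        · simp at hlen
        · rcases (List.isChain_cons_cons.mp hc).1 with h | h
          · simp [h]
          · simp [h]
    rcases flatMap_head r (by rintro rfl; simp at hlen) with ⟨z, hz⟩
    refine ⟨z, ?_, ?_⟩
    · show (pal k).flatMap tribMap ++ [0] ++ z = (tribIter (k+2)).flatMap tribMap
      rw [← hr, List.flatMap_append, hz]
      simp
    · have h1 : r.length + 1 ≤ (r.flatMap tribMap).length := length_flatMap_gt r hzero
      rw [hz] at h1
      simp only [List.length_cons] at h1
      omega

lemma tribIter_prefix_succ (m : ℕ) : tribIter m <+: tribIter (m+1) := by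
  induction m with
  | zero => exact ⟨[1], rfl⟩
  | succ m ih =>
    rcases ih with ⟨s, hs⟩
    exact ⟨s.flatMap tribMap, by
      show (tribIter m).flatMap tribMap ++ _ = (tribIter (m+1)).flatMap tribMap
      rw [← hs, List.flatMap_append]⟩

lemma tribIter_prefix {a b : ℕ} (h : a ≤ b) : tribIter a <+: tribIter b := by
  induction b with
  | zero => rw [Nat.le_zero.mp h]
  | succ b ih =>
    rcases Nat.lt_or_ge a (b+1) with h' | h'
    · exact (ih (Nat.lt_succ_iff.mp h')).trans (tribIter_prefix_succ b)
    · rw [Nat.le_antisymm h h']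

lemma tribIter_length (m : ℕ) : m + 1 ≤ (tribIter m).length := by
  induction m with
  | zero => simp [tribIter]
  | succ m ih =>
    have h0 : 0 ∈ tribIter m := by
      rcases tribIter_head m with ⟨z, hz⟩; rw [hz]; simp
    have := length_flatMap_gt (tribIter m) h0
    show m + 2 ≤ ((tribIter m).flatMap tribMap).length
    omega

lemma tribWord_eq_iter {p m : ℕ} (h : p < (tribIter m).length) :
    tribWord p = (tribIter m).getD p 0 := by
  unfold tribWord
  have hp : p < (tribIter (p+1)).length := by
    have := tribIter_length (p+1); omega
  rcases Nat.le_total (p+1) m with hm | hm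
  · have hpre := tribIter_prefix hm
    rw [List.getD_eq_getElem _ _ hp, List.getD_eq_getElem _ _ h]
    exact hpre.getElem hp
  · have hpre := tribIter_prefix hm
    rw [List.getD_eq_getElem _ _ hp, List.getD_eq_getElem _ _ h]
    exact (hpre.getElem h).symm

lemma tribWord_eq_pal {p k : ℕ} (h : p < (pal k).length) :
    tribWord p = (pal k).getD p 0 := by
  rcases pal_prefix k with ⟨r, hr, _⟩
  have hpre : pal k <+: tribIter (k+2) := ⟨r, hr⟩
  have hlt : p < (tribIter (k+2)).length := by
    have := hpre.length_le; omega
  rw [tribWord_eq_iter hlt, List.getD_eq_getElem _ _ hlt, List.getD_eq_getElem _ _ h]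
  exact (hpre.getElem h).symm

/-- `pal (k+1) = tribIter k ++ pal k`. -/
lemma pal_succ (k : ℕ) : pal (k+1) = tribIter k ++ pal k := by
  induction k with
  | zero => rfl
  | succ k ih =>
    show (pal (k+1)).flatMap tribMap ++ [0] = (tribIter k).flatMap tribMap ++ pal (k+1)
    conv_lhs => rw [ih]
    rw [List.flatMap_append, List.append_assoc]
    rfl

lemma tribIter_recur (k : ℕ) :
    tribIter (k+3) = tribIter (k+2) ++ tribIter (k+1) ++ tribIter k := by
  induction k with
  | zero => rfl
  | succ k ih =>
    have h : tribIter (k+4)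
        = (tribIter (k+2) ++ tribIter (k+1) ++ tribIter k).flatMap tribMap := by
      rw [← ih]; rfl
    rw [show k+1+3 = k+4 from rfl, h, List.flatMap_append, List.flatMap_append]
    rfl

lemma tribIter_length_recur (k : ℕ) :
    (tribIter (k+3)).length
      = (tribIter (k+2)).length + (tribIter (k+1)).length + (tribIter k).length := by
  rw [tribIter_recur]; simp; omega

lemma parity_aux (k : ℕ) :
    (pal (4*k)).length % 2 = 0 ∧ (tribIter (4*k)).length % 2 = 1 ∧
    (tribIter (4*k+1)).length % 2 = 0 ∧ (tribIter (4*k+2)).length % 2 = 0 ∧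
    (tribIter (4*k+3)).length % 2 = 1 := by
  induction k with
  | zero => refine ⟨rfl, rfl, rfl, rfl, rfl⟩
  | succ k ih =>
    obtain ⟨hp, h0, h1, h2, h3⟩ := ih
    have e4 := tribIter_length_recur (4*k+1)
    have e5 := tribIter_length_recur (4*k+2)
    have e6 := tribIter_length_recur (4*k+3)
    have e7 := tribIter_length_recur (4*k+4)
    have hp1 : (pal (4*k+1)).length = (tribIter (4*k)).length + (pal (4*k)).length := by
      rw [pal_succ]; simp
    have hp2 : (pal (4*k+2)).length = (tribIter (4*k+1)).length + (pal (4*k+1)).length := by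
      rw [pal_succ]; simp
    have hp3 : (pal (4*k+3)).length = (tribIter (4*k+2)).length + (pal (4*k+2)).length := by
      rw [pal_succ]; simp
    have hp4 : (pal (4*k+4)).length = (tribIter (4*k+3)).length + (pal (4*k+3)).length := by
      rw [pal_succ]; simp
    simp only [show 4*(k+1) = 4*k+4 from by ring, show 4*k+1+3 = 4*k+4 from by ring,
      show 4*k+1+2 = 4*k+3 from by ring, show 4*k+1+1 = 4*k+2 from by ring,
      show 4*k+2+3 = 4*k+5 from by ring, show 4*k+2+2 = 4*k+4 from by ring,
      show 4*k+2+1 = 4*k+3 from by ring, show 4*k+3+3 = 4*k+6 from by ring,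
      show 4*k+3+2 = 4*k+5 from by ring, show 4*k+3+1 = 4*k+4 from by ring,
      show 4*k+4+3 = 4*k+7 from by ring, show 4*k+4+2 = 4*k+6 from by ring,
      show 4*k+4+1 = 4*k+5 from by ring] at e4 e5 e6 e7 ⊢
    omega

lemma pal_length_ge (k : ℕ) : k ≤ (pal k).length := by
  induction k with
  | zero => simp
  | succ k ih =>
    rw [pal_succ, List.length_append]
    have := tribIter_length k
    omega

/-- For every `n` there is a palindromic prefix of length at least `n` and with the
same parity as `n`. -/
lemma exists_pal (n : ℕ) : ∃ k, n ≤ (pal k).length ∧ (pal k).length % 2 = n % 2 := by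
  rcases Nat.even_or_odd n with he | ho
  · refine ⟨4*n, ?_, ?_⟩
    · calc n ≤ 4*n := by omega
        _ ≤ (pal (4*n)).length := pal_length_ge _
    · have := (parity_aux n).1
      rcases he with ⟨m, hm⟩
      omega
  · refine ⟨4*n+1, ?_, ?_⟩
    · calc n ≤ 4*n+1 := by omega
        _ ≤ (pal (4*n+1)).length := pal_length_ge _
    · obtain ⟨hp, h0, -⟩ := parity_aux n
      have hp1 : (pal (4*n+1)).length = (tribIter (4*n)).length + (pal (4*n)).length := by
        rw [pal_succ]; simp
      rcases ho with ⟨m, hm⟩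
      omega

/-- The Tribonacci word contains palindromic factors of every length. -/
theorem tribWord_palindromes_every_length (n : ℕ) :
    ∃ i, ∀ j < n, tribWord (i + j) = tribWord (i + n - 1 - j) := by
  rcases Nat.eq_zero_or_pos n with rfl | hn
  · exact ⟨0, fun j hj => absurd hj (Nat.not_lt_zero j)⟩
  obtain ⟨k, hk, hpar⟩ := exists_pal n
  refine ⟨((pal k).length - n) / 2, fun j hj => ?_⟩
  set i := ((pal k).length - n) / 2 with hi
  have hLni : (pal k).length = n + 2 * i := by omega
  have h1 : i + j < (pal k).length := by omega
  have h2 : i + n - 1 - j < (pal k).length := by omega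
  have h1' : i + j < (pal k).reverse.length := by rw [List.length_reverse]; exact h1
  have h3 : (pal k).length - 1 - (i + j) < (pal k).length := by omega
  rw [tribWord_eq_pal h1, tribWord_eq_pal h2]
  have hrev := pal_reverse k
  have hidx : (pal k).length - 1 - (i + j) = i + n - 1 - j := by omega
  calc (pal k).getD (i + j) 0
      = (pal k).reverse.getD (i + j) 0 := by rw [hrev]
    _ = (pal k).getD ((pal k).length - 1 - (i + j)) 0 := by
        rw [List.getD_eq_getElem _ _ h1', List.getD_eq_getElem _ _ h3]
        exact List.getElem_reverse h1'
    _ = (pal k).getD (i + n - 1 - j) 0 := by rw [hidx]
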